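/- Let R be a discrete valuation ring with uniformizer t, valuation val and residue field 𝔽 = R/tR. Let M and N be free R-modules of the same finite rank, and B : M × N → R an R-bilinear pairing whose Gram determinant (with respect to any bases) is nonzero. For i ≥ 0 set M^i := {m ∈ M | B(m, N) ⊆ t^i R}, and let M̄^i be the image of M^i in M ⊗_R 𝔽. Then Σ_{i≥1} dim_𝔽 M̄^i = val(det B). -/

import Mathlib

open scoped BigOperators

open Module Submodule

/-- Coordinate criterion for membership in `I • ⊤`. -/
private theorem mem_ideal_smul_top_iff_repr {R M ι : Type*} [CommRing R] [AddCommGroup M]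
    [Module R M] (e : Basis ι R M) (I : Ideal R) (x : M) :
    x ∈ I • (⊤ : Submodule R M) ↔ ∀ j, e.repr x j ∈ I := by
  constructor
  · intro hx j
    refine Submodule.smul_induction_on hx (fun r hr m _ => ?_) (fun a b ha hb => ?_)
    · rw [map_smul, Finsupp.smul_apply, smul_eq_mul]
      exact I.mul_mem_right _ hr
    · rw [map_add, Finsupp.add_apply]
      exact I.add_mem ha hb
  · intro h
    have hxe := e.linearCombination_repr x
    rw [Finsupp.linearCombination_apply, Finsupp.sum] at hxe
    rw [← hxe]
    exact Submodule.sum_mem _ fun j _ => Submodule.smul_mem_smul (h j) Submodule.mem_top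

/-- The abstract Jantzen filtration lemma.  `R` is a discrete valuation ring with
uniformizer `t` and residue field `𝔽 = R/tR`; `M`, `N` are free `R`-modules of the same
finite rank (with bases `b`, `c`); `B` is an `R`-bilinear pairing whose Gram determinant
`det (B (b i) (c j))` is nonzero, with valuation `v` (i.e. it is associated to `t^v`).
Setting `M^i = {m | B(m, N) ⊆ t^i R}` and letting `M̄^i` be the image of `M^i` in
`M ⊗_R 𝔽 = M/tM`, one has `Σ_{i≥1} dim_𝔽 M̄^i = v = val (det B)`. -/
theorem jantzen_sum_of_dims_eq_valuation_of_det
    {R M N : Type*} [CommRing R] [IsDomain R] [IsDiscreteValuationRing R]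
    [AddCommGroup M] [Module R M] [AddCommGroup N] [Module R N]
    (t : R) (ht : Irreducible t)
    (n : ℕ) (b : Module.Basis (Fin n) R M) (c : Module.Basis (Fin n) R N)
    (B : M →ₗ[R] N →ₗ[R] R)
    (v : ℕ)
    (hv : Associated (t ^ v) (Matrix.det (Matrix.of fun i j => B (b i) (c j)))) :
    ∑ᶠ i : ℕ,
      Module.finrank (R ⧸ Ideal.span {t})
        (Submodule.span (R ⧸ Ideal.span {t})
          ((Submodule.mkQ ((Ideal.span {t}) • (⊤ : Submodule R M))) ''
            {m : M | ∀ y : N, B m y ∈ Ideal.span {t ^ (i + 1)}})) = v := by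
  classical
  have htne : t ≠ 0 := ht.ne_zero
  have hdet : (Matrix.of fun i j => B (b i) (c j)).det ≠ 0 := by
    intro h0
    rw [h0] at hv
    exact pow_ne_zero v htne ((associated_zero_iff_eq_zero _).mp hv)
  haveI : Module.Finite R N := Module.Finite.of_basis c
  haveI : Module.Free R N := Module.Free.of_basis c
  set d : Basis (Fin n) R (Module.Dual R N) := c.dualBasis with hd
  -- `B : M →ₗ Dual R N` is injective
  have hker : ∀ m : M, B m = 0 → m = 0 := by
    intro m hm
    have hrep : (fun i => b.repr m i) = 0 := by
      apply Matrix.eq_zero_of_vecMul_eq_zero hdet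
      funext j
      have h1 : B m (c j) = 0 := by rw [hm]; rfl
      conv_lhs at h1 => rw [← b.sum_repr m]
      simp only [map_sum, map_smul, LinearMap.sum_apply, LinearMap.smul_apply,
        smul_eq_mul] at h1
      simpa [Matrix.vecMul, dotProduct] using h1
    have h2 : b.repr m = 0 := Finsupp.ext fun i => congrFun hrep i
    exact b.repr.map_eq_zero_iff.mp h2
  have hinj : Function.Injective (B : M →ₗ[R] Module.Dual R N) :=
    LinearMap.ker_eq_bot.mp (LinearMap.ker_eq_bot'.mpr hker)
  -- Smith normal form of the range of `B` inside `Dual R N`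
  obtain ⟨n', snf⟩ := (LinearMap.range (B : M →ₗ[R] Module.Dual R N)).smithNormalForm d
  have hcard : n' = n := by
    have e0 : Basis (Fin n') R M :=
      snf.bN.map (LinearEquiv.ofInjective (B : M →ₗ[R] Module.Dual R N) hinj).symm
    simpa using Fintype.card_congr (e0.indexEquiv b)
  subst hcard
  set eqv : M ≃ₗ[R] LinearMap.range (B : M →ₗ[R] Module.Dual R N) :=
    LinearEquiv.ofInjective _ hinj with heqv
  set e : Basis (Fin n') R M := snf.bN.map eqv.symm with he
  have hφe : ∀ k, B (e k) = (snf.bN k : Module.Dual R N) := by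
    intro k
    have h1 : e k = eqv.symm (snf.bN k) := by rw [he, Basis.map_apply]
    rw [h1]
    calc B (eqv.symm (snf.bN k))
        = ((eqv (eqv.symm (snf.bN k))) : Module.Dual R N) :=
          (LinearEquiv.ofInjective_apply _ _).symm
      _ = _ := by rw [eqv.apply_symm_apply]
  have hbij : Function.Bijective snf.f :=
    (Fintype.bijective_iff_injective_and_card snf.f).mpr ⟨snf.f.injective, rfl⟩
  set σ : Equiv.Perm (Fin n') := Equiv.ofBijective snf.f hbij with hσ
  -- key coordinate formula
  have key : ∀ (m : M) (k : Fin n'),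
      snf.bM.repr (B m) (snf.f k) = snf.a k * e.repr m k := by
    intro m k
    have hmem : B m ∈ LinearMap.range (B : M →ₗ[R] Module.Dual R N) :=
      LinearMap.mem_range_self _ m
    have h1 := snf.repr_apply_embedding_eq_repr_smul
      (⟨B m, hmem⟩ : LinearMap.range (B : M →ₗ[R] Module.Dual R N)) (i := k)
    rw [map_smul, Finsupp.smul_apply, smul_eq_mul] at h1
    have h2 : e.repr m = snf.bN.repr (eqv m) := by
      rw [he, Basis.map_repr]; rfl
    have h3 : eqv m = (⟨B m, hmem⟩ :
        LinearMap.range (B : M →ₗ[R] Module.Dual R N)) :=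
      Subtype.ext (LinearEquiv.ofInjective_apply _ m)
    rw [h2, h3]
    exact h1
  -- membership in an ideal tested on coordinates w.r.t. `snf.bM`
  have dualchar : ∀ (J : Ideal R) (g : Module.Dual R N),
      (∀ y, g y ∈ J) ↔ ∀ j, snf.bM.repr g j ∈ J := by
    intro J g
    constructor
    · intro h j
      have h2 : snf.bM.repr g j = g ((Module.evalEquiv R N).symm (snf.bM.coord j)) := by
        rw [Module.apply_evalEquiv_symm_apply, Basis.coord_apply]
      rw [h2]; exact h _
    · intro h y
      have h3 : g y = ∑ j ∈ (snf.bM.repr g).support, snf.bM.repr g j * (snf.bM j) y := by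
        conv_lhs => rw [← snf.bM.linearCombination_repr g]
        rw [Finsupp.linearCombination_apply, Finsupp.sum]
        simp [LinearMap.sum_apply]
      rw [h3]
      exact Submodule.sum_mem _ fun j _ => Ideal.mul_mem_right _ _ (h j)
  -- characterization of the Jantzen submodules
  have memchar : ∀ (j : ℕ) (m : M),
      (∀ y : N, B m y ∈ Ideal.span {t ^ j}) ↔
        ∀ k, snf.a k * e.repr m k ∈ Ideal.span {t ^ j} := by
    intro j m
    constructor
    · intro h k
      rw [← key]
      exact (dualchar _ (B m)).mp h _
    · intro h y
      refine (dualchar _ (B m)).mpr ?_ y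
      intro jj
      obtain ⟨k, hk⟩ := σ.surjective jj
      have hfk : σ k = snf.f k := rfl
      rw [← hk, hfk, key]
      exact h k
  -- the elementary divisors are nonzero, with valuations `w k`
  have hane : ∀ k, snf.a k ≠ 0 := by
    intro k hk
    have h1 := snf.snf k
    rw [hk, zero_smul] at h1
    exact snf.bN.ne_zero k (ZeroMemClass.coe_eq_zero.mp h1)
  choose w hw using fun k => IsDiscreteValuationRing.associated_pow_irreducible (hane k) ht
  -- determinant computations
  have hmat : LinearMap.toMatrix b d (B : M →ₗ[R] Module.Dual R N) =
      Matrix.transpose (Matrix.of fun i j => B (b i) (c j)) := by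
    ext i j
    rw [LinearMap.toMatrix_apply, hd, Basis.dualBasis_repr]
    rfl
  have hMe : LinearMap.toMatrix e snf.bM (B : M →ₗ[R] Module.Dual R N) =
      (Matrix.diagonal snf.a).submatrix ⇑σ.symm id := by
    ext jj k
    rw [LinearMap.toMatrix_apply, hφe k, snf.snf k, map_smul, Finsupp.smul_apply,
      smul_eq_mul, Basis.repr_self, Matrix.submatrix_apply, Matrix.diagonal_apply, id]
    by_cases hcase : snf.f k = jj
    · have h2 : σ.symm jj = k := by rw [← hcase]; exact σ.symm_apply_apply k
      rw [if_pos h2, Finsupp.single_apply, if_pos hcase, mul_one, h2]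
    · have h2 : σ.symm jj ≠ k := fun hc => hcase (by rw [← hc]; exact σ.apply_symm_apply jj)
      rw [if_neg h2, Finsupp.single_apply, if_neg hcase, mul_zero]
  have hsgn : IsUnit ((Equiv.Perm.sign σ.symm : ℤ) : R) := by
    rcases Int.units_eq_one_or (Equiv.Perm.sign σ.symm) with h | h <;> simp [h]
  have hprodE : Associated (∏ k, snf.a k)
      ((LinearMap.toMatrix e snf.bM (B : M →ₗ[R] Module.Dual R N)).det) := by
    rw [hMe, Matrix.det_permute σ.symm, Matrix.det_diagonal]
    obtain ⟨u, hu⟩ := hsgn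
    exact ⟨u, by rw [hu]; ring⟩
  have hU : IsUnit (snf.bM.toMatrix ⇑d).det := by
    apply IsUnit.of_mul_eq_one (d.toMatrix ⇑snf.bM).det
    rw [← Matrix.det_mul, Basis.toMatrix_mul_toMatrix_flip, Matrix.det_one]
  have hV : IsUnit (b.toMatrix ⇑e).det := by
    apply IsUnit.of_mul_eq_one (e.toMatrix ⇑b).det
    rw [← Matrix.det_mul, Basis.toMatrix_mul_toMatrix_flip, Matrix.det_one]
  have hbc : snf.bM.toMatrix ⇑d * LinearMap.toMatrix b d (B : M →ₗ[R] Module.Dual R N) *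
      b.toMatrix ⇑e = LinearMap.toMatrix e snf.bM (B : M →ₗ[R] Module.Dual R N) :=
    basis_toMatrix_mul_linearMap_toMatrix_mul_basis_toMatrix e b snf.bM d _
  have hassoc1 : Associated ((LinearMap.toMatrix b d (B : M →ₗ[R] Module.Dual R N)).det)
      ((LinearMap.toMatrix e snf.bM (B : M →ₗ[R] Module.Dual R N)).det) := by
    obtain ⟨u, hu⟩ := hU
    obtain ⟨u', hu'⟩ := hV
    refine ⟨u * u', ?_⟩
    rw [← hbc, Matrix.det_mul, Matrix.det_mul, ← hu, ← hu', Units.val_mul]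
    ring
  have h5 : (LinearMap.toMatrix b d (B : M →ₗ[R] Module.Dual R N)).det =
      (Matrix.of fun i j => B (b i) (c j)).det := by
    rw [hmat, Matrix.det_transpose]
  have hassoc2 : Associated (t ^ v) (∏ k, snf.a k) := by
    refine (hv.trans ?_).trans hprodE.symm
    rw [← h5]
    exact hassoc1
  have hprodpow : Associated (∏ k, snf.a k) (t ^ ∑ k, w k) := by
    have hps : (∏ k, t ^ w k) = t ^ ∑ k, w k := Finset.prod_pow_eq_pow_sum Finset.univ w t
    rw [← hps]
    exact Associated.prod Finset.univ snf.a (fun k => t ^ w k) (fun k _ => hw k)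
  have hveq : v = ∑ k, w k := by
    have h6 : Associated (t ^ v) (t ^ ∑ k, w k) := hassoc2.trans hprodpow
    have h7 := (pow_dvd_pow_iff htne ht.not_isUnit).mp h6.dvd
    have h8 := (pow_dvd_pow_iff htne ht.not_isUnit).mp h6.symm.dvd
    omega
  -- residue field
  haveI : (Ideal.span ({t} : Set R)).IsMaximal := PrincipalIdealRing.isMaximal_of_irreducible ht
  haveI : Nontrivial (R ⧸ Ideal.span ({t} : Set R)) :=
    Ideal.Quotient.nontrivial_iff.mpr (Ideal.IsMaximal.ne_top ‹_›)
  -- reduction of the basis `e` mod `t`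
  set qe : Fin n' → M ⧸ ((Ideal.span {t}) • (⊤ : Submodule R M)) :=
    fun k => Submodule.Quotient.mk (e k) with hqe
  have hqeli : LinearIndependent (R ⧸ Ideal.span ({t} : Set R)) qe := by
    rw [Fintype.linearIndependent_iff]
    intro g hg
    choose r hr using fun k => Ideal.Quotient.mk_surjective (g k)
    have h1 : (∑ k, g k • qe k) =
        Submodule.mkQ ((Ideal.span {t}) • (⊤ : Submodule R M)) (∑ k, r k • e k) := by
      rw [map_sum]
      refine Finset.sum_congr rfl fun k _ => ?_
      rw [← hr k, Submodule.mkQ_apply, hqe]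
      exact Module.Quotient.mk_smul_mk M (Ideal.span {t}) (r k) (e k)
    rw [h1, Submodule.mkQ_apply, Submodule.Quotient.mk_eq_zero] at hg
    have h2 := (mem_ideal_smul_top_iff_repr e (Ideal.span {t}) _).mp hg
    intro k
    have hrepr : e.repr (∑ j, r j • e j) k = r k := by
      rw [← Basis.equivFun_symm_apply, ← Basis.equivFun_apply, LinearEquiv.apply_symm_apply]
    rw [← hr k]
    rw [Ideal.Quotient.eq_zero_iff_mem]
    have := h2 k
    rwa [hrepr] at this
  -- span computation
  have hspan : ∀ i : ℕ,
      Submodule.span (R ⧸ Ideal.span {t})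
        ((Submodule.mkQ ((Ideal.span {t}) • (⊤ : Submodule R M))) ''
          {m : M | ∀ y : N, B m y ∈ Ideal.span {t ^ (i + 1)}}) =
      Submodule.span (R ⧸ Ideal.span {t}) (qe '' {k | i + 1 ≤ w k}) := by
    intro i
    apply le_antisymm
    · rw [Submodule.span_le]
      rintro z ⟨m, hm, rfl⟩
      have hco := (memchar (i + 1) m).mp hm
      have hqm : Submodule.mkQ ((Ideal.span {t}) • (⊤ : Submodule R M)) m =
          ∑ k, (Ideal.Quotient.mk (Ideal.span {t}) (e.repr m k)) • qe k := by
        conv_lhs => rw [← e.sum_repr m]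
        rw [map_sum]
        refine Finset.sum_congr rfl fun k _ => ?_
        rw [Submodule.mkQ_apply, hqe]
        exact (Module.Quotient.mk_smul_mk M (Ideal.span {t}) (e.repr m k) (e k)).symm
      rw [SetLike.mem_coe, hqm]
      refine Submodule.sum_mem _ fun k _ => ?_
      by_cases hk : i + 1 ≤ w k
      · exact Submodule.smul_mem _ _ (Submodule.subset_span ⟨k, hk, rfl⟩)
      · have h7 : t ^ (i + 1) ∣ snf.a k * e.repr m k := Ideal.mem_span_singleton.mp (hco k)
        have h8 : snf.a k * e.repr m k ∣ t ^ (w k) * e.repr m k := ((hw k).mul_right _).dvd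
        have h9 : t ^ (w k) * t ∣ t ^ (w k) * e.repr m k := by
          refine dvd_trans ?_ (h7.trans h8)
          rw [← pow_succ]
          exact pow_dvd_pow t (by omega)
        have htdvd : t ∣ e.repr m k :=
          (mul_dvd_mul_iff_left (pow_ne_zero (w k) htne)).mp h9
        have h10 : Ideal.Quotient.mk (Ideal.span {t}) (e.repr m k) = 0 :=
          Ideal.Quotient.eq_zero_iff_mem.mpr (Ideal.mem_span_singleton.mpr htdvd)
        rw [h10, zero_smul]
        exact Submodule.zero_mem _
    · rw [Submodule.span_le]
      rintro z ⟨k, hk, rfl⟩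
      refine Submodule.subset_span ⟨e k, ?_, by rw [Submodule.mkQ_apply, hqe]⟩
      refine (memchar (i + 1) (e k)).mpr ?_
      intro k'
      rw [Basis.repr_self, Finsupp.single_apply]
      by_cases hkk : k = k'
      · subst hkk
        rw [if_pos rfl, mul_one]
        refine Ideal.mem_span_singleton.mpr ?_
        exact dvd_trans (pow_dvd_pow t hk) (hw k).symm.dvd
      · rw [if_neg hkk, mul_zero]
        exact Submodule.zero_mem _
  -- dimension computation
  have hdim : ∀ i : ℕ,
      Module.finrank (R ⧸ Ideal.span {t})
        (Submodule.span (R ⧸ Ideal.span {t})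
          ((Submodule.mkQ ((Ideal.span {t}) • (⊤ : Submodule R M))) ''
            {m : M | ∀ y : N, B m y ∈ Ideal.span {t ^ (i + 1)}})) =
      (Finset.univ.filter fun k => i + 1 ≤ w k).card := by
    intro i
    rw [hspan i, Set.image_eq_range]
    rw [finrank_span_eq_card (show LinearIndependent (R ⧸ Ideal.span ({t} : Set R))
      (fun x : ↥{k | i + 1 ≤ w k} => qe ↑x) from hqeli.comp _ Subtype.val_injective)]
    simp [Fintype.card_subtype]
  have hwle : ∀ k, w k ≤ v := by
    intro k
    rw [hveq]
    exact Finset.single_le_sum (fun _ _ => Nat.zero_le _) (Finset.mem_univ k)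
  rw [finsum_congr hdim]
  have hsupp : (Function.support fun i : ℕ =>
      (Finset.univ.filter fun k => i + 1 ≤ w k).card) ⊆ ↑(Finset.range v) := by
    intro i hi
    rw [Function.mem_support] at hi
    by_contra hiv
    apply hi
    rw [Finset.coe_range, Set.mem_Iio, not_lt] at hiv
    rw [Finset.card_eq_zero, Finset.filter_eq_empty_iff]
    intro k _
    have := hwle k
    omega
  rw [finsum_eq_sum_of_support_subset _ hsupp]
  calc ∑ i ∈ Finset.range v, (Finset.univ.filter fun k => i + 1 ≤ w k).card
      = ∑ i ∈ Finset.range v, ∑ k, if i + 1 ≤ w k then 1 else 0 := by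
        refine Finset.sum_congr rfl fun i _ => ?_
        rw [Finset.card_filter]
    _ = ∑ k, ∑ i ∈ Finset.range v, if i + 1 ≤ w k then 1 else 0 := Finset.sum_comm
    _ = ∑ k, w k := by
        refine Finset.sum_congr rfl fun k _ => ?_
        rw [← Finset.card_filter]
        have hfilt : Finset.filter (fun i => i + 1 ≤ w k) (Finset.range v) =
            Finset.range (w k) := by
          ext i
          simp only [Finset.mem_filter, Finset.mem_range]
          constructor
          · rintro ⟨_, h2⟩; omega
          · intro h2; exact ⟨lt_of_lt_of_le h2 (hwle k), by omega⟩
        rw [hfilt, Finset.card_range]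
    _ = v := hveq.symm
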